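/- Let > be any monomial order on R = MvPolynomial (Fin n) (ZMod 2) and let P ⊆ (Fin n → ZMod 2). Then the set of standard monomials of the vanishing ideal I(P) with respect to > has cardinality |P|. -/

import Mathlib

open MvPolynomial

/-- A Boolean (multilinear) polynomial: every variable occurs with exponent ≤ 1
in every monomial of the support. -/
def IsBooleanPoly {n : ℕ} (f : MvPolynomial (Fin n) (ZMod 2)) : Prop :=
  ∀ m ∈ f.support, ∀ i, m i ≤ 1

/-- The field ideal ⟨x_i² + x_i : i⟩. -/
noncomputable def fieldIdeal (n : ℕ) : Ideal (MvPolynomial (Fin n) (ZMod 2)) :=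
  Ideal.span (Set.range fun i : Fin n => X i ^ 2 + X i)

/-- The vanishing ideal of a set of points. -/
noncomputable def pointsVanishingIdeal {n : ℕ} (P : Set (Fin n → ZMod 2)) :
    Ideal (MvPolynomial (Fin n) (ZMod 2)) where
  carrier := {f | ∀ p ∈ P, eval p f = 0}
  add_mem' := by
    intro a b ha hb p hp
    simp [ha p hp, hb p hp]
  zero_mem' := by
    intro p hp
    simp
  smul_mem' := by
    intro c a ha p hp
    simp [smul_eq_mul, ha p hp]

/-- Strict extended lex order on Boolean polynomials: `p < q` iff the lex-largest
exponent vector in the symmetric difference of the supports belongs to the support of `q`. -/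
def ExtLexLt {n : ℕ} (p q : MvPolynomial (Fin n) (ZMod 2)) : Prop :=
  ∃ m ∈ q.support \ p.support, ∀ m' ∈ (symmDiff p.support q.support), toLex m' ≤ toLex m

def ExtLexLe {n : ℕ} (p q : MvPolynomial (Fin n) (ZMod 2)) : Prop :=
  p = q ∨ ExtLexLt p q

/-- `t` is the leading monomial of `f` with respect to the monomial order `m`. -/
def IsLeadingMonomial {n : ℕ} (m : MonomialOrder (Fin n))
    (f : MvPolynomial (Fin n) (ZMod 2)) (t : Fin n →₀ ℕ) : Prop :=
  t ∈ f.support ∧ ∀ t' ∈ f.support, m.toSyn t' ≤ m.toSyn t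

/-- `t` is a standard monomial of the ideal `I` w.r.t. the monomial order `m`:
it is not the leading monomial of any (necessarily nonzero) element of `I`. -/
def IsStdMonomial {n : ℕ} (m : MonomialOrder (Fin n))
    (I : Ideal (MvPolynomial (Fin n) (ZMod 2))) (t : Fin n →₀ ℕ) : Prop :=
  ¬ ∃ f ∈ I, IsLeadingMonomial m f t



section Aux

variable {n : ℕ}

/-- Evaluation as a linear map to functions on `P`. -/
noncomputable def evalLM (P : Set (Fin n → ZMod 2)) :
    MvPolynomial (Fin n) (ZMod 2) →ₗ[ZMod 2] (↥P → ZMod 2) where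
  toFun f := fun p => eval p.1 f
  map_add' := by intros; funext; simp
  map_smul' := by intros; funext; simp [smul_eval]

lemma mem_pointsVanishingIdeal' {P : Set (Fin n → ZMod 2)}
    {f : MvPolynomial (Fin n) (ZMod 2)} :
    f ∈ pointsVanishingIdeal P ↔ ∀ p ∈ P, eval p f = 0 := Iff.rfl

lemma evalLM_eq_zero_iff {P : Set (Fin n → ZMod 2)} {f : MvPolynomial (Fin n) (ZMod 2)} :
    evalLM P f = 0 ↔ f ∈ pointsVanishingIdeal P := by
  constructor
  · intro h p hp
    exact congrFun h ⟨p, hp⟩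
  · intro h
    funext p
    exact h p.1 p.2

/-- Indicator polynomial of a point. -/
noncomputable def indPoly (q : Fin n → ZMod 2) : MvPolynomial (Fin n) (ZMod 2) :=
  ∏ i, (X i + C (q i) + 1)

lemma eval_indPoly (p q : Fin n → ZMod 2) :
    eval p (indPoly q) = if p = q then 1 else 0 := by
  have key : ∀ a b : ZMod 2, a + b + 1 = if a = b then 1 else 0 := by decide
  simp only [indPoly, map_prod, map_add, eval_X, eval_C, map_one]
  by_cases h : p = q
  · subst h
    simp [key]
  · obtain ⟨i, hi⟩ := Function.ne_iff.mp h
    rw [if_neg h]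
    apply Finset.prod_eq_zero (Finset.mem_univ i)
    rw [key]
    simp [hi]

lemma evalLM_surjective (P : Set (Fin n → ZMod 2)) :
    Function.Surjective (evalLM P) := by
  intro g
  classical
  have hPfin : P.Finite := Set.toFinite P
  refine ⟨∑ p ∈ hPfin.toFinset, C (if h : p ∈ P then g ⟨p, h⟩ else 0) * indPoly p, ?_⟩
  funext q
  show eval (q : Fin n → ZMod 2) _ = g q
  rw [map_sum, Finset.sum_eq_single q.1]
  · simp [eval_indPoly, q.2]
  · intro p hp hne
    simp [eval_indPoly, Ne.symm hne]
  · intro h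
    exact absurd (hPfin.mem_toFinset.mpr q.2) h

end Aux

section Aux2

variable {n : ℕ}

lemma exists_isLeadingMonomial (m : MonomialOrder (Fin n))
    {f : MvPolynomial (Fin n) (ZMod 2)} (hf : f ≠ 0) :
    ∃ t, IsLeadingMonomial m f t ∧ m.toSyn t = f.support.sup m.toSyn := by
  obtain ⟨t, ht, hsup⟩ := Finset.exists_mem_eq_sup f.support
    (MvPolynomial.support_nonempty.mpr hf) m.toSyn
  exact ⟨t, ⟨ht, fun t' ht' => hsup ▸ Finset.le_sup ht'⟩, hsup.symm⟩

lemma zmod2_pow_eq {a : ZMod 2} {k : ℕ} (hk : 1 ≤ k) : a ^ k = a := by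
  have ha := (by decide : ∀ b : ZMod 2, b = 0 ∨ b = 1) a
  rcases ha with rfl | rfl
  · exact zero_pow (by omega)
  · exact one_pow _

/-- Standard monomials of the vanishing ideal are multilinear. -/
lemma stdMonomial_multilinear (m : MonomialOrder (Fin n)) (P : Set (Fin n → ZMod 2))
    {t : Fin n →₀ ℕ} (ht : IsStdMonomial m (pointsVanishingIdeal P) t) (i : Fin n) :
    t i ≤ 1 := by
  by_contra h
  push_neg at h
  set u : Fin n →₀ ℕ := t - Finsupp.single i 1 with hu
  have hui : u i = t i - 1 := by simp [hu]
  have hut : u ≠ t := by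
    intro hh
    have := congrArg (fun v => v i) hh
    simp only [hui] at this
    omega
  have hule : u ≤ t := by
    intro j
    simp only [hu, Finsupp.tsub_apply]
    exact Nat.sub_le _ _
  set g : MvPolynomial (Fin n) (ZMod 2) := monomial t 1 + monomial u 1 with hg
  have hcoefft : coeff t g = 1 := by
    simp [hg, coeff_monomial, hut]
  apply ht
  refine ⟨g, ?_, ?_, ?_⟩
  · -- g vanishes on all points
    intro p _
    have h1 : eval p (monomial t (1 : ZMod 2)) = eval p (monomial u (1 : ZMod 2)) := by
      rw [eval_monomial, eval_monomial]
      simp only [Finsupp.prod, one_mul]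
      have hprod : ∀ v : Fin n →₀ ℕ, ∏ x ∈ v.support, p x ^ v x = ∏ x : Fin n, p x ^ v x :=
        fun v => Finset.prod_subset (Finset.subset_univ _)
          (fun x _ hx => by rw [Finsupp.notMem_support_iff.mp hx, pow_zero])
      rw [hprod t, hprod u]
      apply Finset.prod_congr rfl
      intro j _
      by_cases hj : j = i
      · subst hj
        rw [hui, zmod2_pow_eq (by omega), zmod2_pow_eq (by omega)]
      · congr 1
        simp [hu, Finsupp.tsub_apply, Finsupp.single_apply, Ne.symm hj]
    rw [hg, map_add, h1]
    rw [CharTwo.add_self_eq_zero]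
  · -- t ∈ support g
    rw [mem_support_iff, hcoefft]
    exact one_ne_zero
  · -- all monomials of g are ≤ t
    intro t' ht'
    have : t' ∈ (monomial t (1 : ZMod 2)).support ∪ (monomial u (1 : ZMod 2)).support :=
      MvPolynomial.support_add ht'
    simp only [support_monomial, if_neg (one_ne_zero (α := ZMod 2)), Finset.mem_union,
      Finset.mem_singleton] at this
    rcases this with h | h
    · exact h ▸ le_refl _
    · exact h ▸ m.toSyn_monotone hule

lemma stdMonomials_finite (m : MonomialOrder (Fin n)) (P : Set (Fin n → ZMod 2)) :
    {t : Fin n →₀ ℕ | IsStdMonomial m (pointsVanishingIdeal P) t}.Finite := by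
  have hsub : {t : Fin n →₀ ℕ | IsStdMonomial m (pointsVanishingIdeal P) t} ⊆
      {t : Fin n →₀ ℕ | ∀ i, t i ≤ 1} := by
    intro t ht i
    exact stdMonomial_multilinear m P ht i
  refine Set.Finite.subset ?_ hsub
  have : Set.Finite ((fun t : Fin n →₀ ℕ => (t : Fin n → ℕ)) ''
      {t : Fin n →₀ ℕ | ∀ i, t i ≤ 1}) := by
    apply Set.Finite.subset (Set.Finite.pi (fun _ : Fin n => Set.finite_Icc 0 1))
    rintro _ ⟨t, ht, rfl⟩
    intro i _
    exact ⟨Nat.zero_le _, ht i⟩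
  exact Set.Finite.of_finite_image this (Set.injOn_of_injective (DFunLike.coe_injective))

end Aux2

section Aux3

variable {n : ℕ}

lemma zmod2_ne_zero {c : ZMod 2} (h : c ≠ 0) : c = 1 := by revert h; revert c; decide

lemma zmod2_cancel {a b : ZMod 2} : (a + b) + b = a := by
  rw [add_assoc, CharTwo.add_self_eq_zero, add_zero]

lemma evalLM_mem_span (m : MonomialOrder (Fin n)) (P : Set (Fin n → ZMod 2))
    (f : MvPolynomial (Fin n) (ZMod 2)) :
    evalLM P f ∈ Submodule.span (ZMod 2)
      ((fun t : Fin n →₀ ℕ => evalLM P (monomial t 1)) ''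
        {t : Fin n →₀ ℕ | IsStdMonomial m (pointsVanishingIdeal P) t}) := by
  set W := Submodule.span (ZMod 2)
      ((fun t : Fin n →₀ ℕ => evalLM P (monomial t 1)) ''
        {t : Fin n →₀ ℕ | IsStdMonomial m (pointsVanishingIdeal P) t}) with hW
  suffices H : ∀ s : m.syn, ∀ f : MvPolynomial (Fin n) (ZMod 2),
      f.support.sup m.toSyn ≤ s → evalLM P f ∈ W from H _ f le_rfl
  intro s
  induction s using WellFoundedLT.induction with
  | _ s IH =>
  intro f hfs
  by_cases hf0 : f = 0
  · simp [hf0]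
  obtain ⟨t, ⟨htmem, htmax⟩, htsup⟩ := exists_isLeadingMonomial m hf0
  -- find g with leading monomial t and evalLM g ∈ W
  obtain ⟨g, hgcoeff, hgmax, hgW⟩ :
      ∃ g : MvPolynomial (Fin n) (ZMod 2), coeff t g = 1 ∧
        (∀ t' ∈ g.support, m.toSyn t' ≤ m.toSyn t) ∧ evalLM P g ∈ W := by
    by_cases hstd : IsStdMonomial m (pointsVanishingIdeal P) t
    · refine ⟨monomial t 1, by simp [coeff_monomial], ?_, ?_⟩
      · intro t' ht'
        rw [support_monomial, if_neg one_ne_zero, Finset.mem_singleton] at ht'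
        exact ht' ▸ le_refl _
      · exact Submodule.subset_span ⟨t, hstd, rfl⟩
    · simp only [IsStdMonomial, not_not] at hstd
      obtain ⟨g, hgI, hgt, hgmax⟩ := hstd
      refine ⟨g, ?_, hgmax, ?_⟩
      · exact zmod2_ne_zero (mem_support_iff.mp hgt)
      · rw [evalLM_eq_zero_iff.mpr hgI]
        exact Submodule.zero_mem W
  set f' := f + g with hf'
  have hcf : coeff t f = 1 := zmod2_ne_zero (mem_support_iff.mp htmem)
  have hcf' : coeff t f' = 0 := by
    rw [hf', coeff_add, hcf, hgcoeff]
    exact CharTwo.add_self_eq_zero 1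
  have hsupf' : ∀ t' ∈ f'.support, m.toSyn t' < m.toSyn t := by
    intro t' ht'
    have hne : t' ≠ t := by
      intro h
      exact mem_support_iff.mp ht' (h ▸ hcf')
    have hle : m.toSyn t' ≤ m.toSyn t := by
      have := MvPolynomial.support_add ht'
      rw [Finset.mem_union] at this
      rcases this with h | h
      · rw [htsup]; exact Finset.le_sup h
      · exact hgmax t' h
    exact lt_of_le_of_ne hle (fun h => hne (m.toSyn.injective h))
  have hvalf : evalLM P f = evalLM P f' + evalLM P g := by
    funext p
    show eval (p : Fin n → ZMod 2) f = eval p f' + eval p g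
    rw [hf', map_add]
    exact zmod2_cancel.symm
  rw [hvalf]
  apply Submodule.add_mem _ _ hgW
  by_cases hf'0 : f' = 0
  · simp [hf'0]
  · obtain ⟨t'', ⟨ht''mem, _⟩, ht''sup⟩ := exists_isLeadingMonomial m hf'0
    have hlt : f'.support.sup m.toSyn < s := by
      rw [← ht''sup]
      exact lt_of_lt_of_le (hsupf' t'' ht''mem) (le_trans (Finset.le_sup htmem) hfs)
    exact IH _ hlt f' le_rfl

lemma stdMonomials_linearIndependent (m : MonomialOrder (Fin n)) (P : Set (Fin n → ZMod 2)) :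
    LinearIndependent (ZMod 2)
      (fun t : ↥{t : Fin n →₀ ℕ | IsStdMonomial m (pointsVanishingIdeal P) t} =>
        evalLM P (monomial t.1 1)) := by
  rw [linearIndependent_iff]
  intro l hl
  by_contra hl0
  have SMdef : ∀ t : Fin n →₀ ℕ, t ∈ {t : Fin n →₀ ℕ | IsStdMonomial m (pointsVanishingIdeal P) t} ↔ IsStdMonomial m (pointsVanishingIdeal P) t := fun _ => Iff.rfl
  set f : MvPolynomial (Fin n) (ZMod 2) := ∑ t ∈ l.support, monomial t.1 (l t) with hf
  have hcoef : ∀ t₀ : ↥{t : Fin n →₀ ℕ | IsStdMonomial m (pointsVanishingIdeal P) t}, coeff t₀.1 f = l t₀ := by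
    intro t₀
    rw [hf, MvPolynomial.coeff_sum]
    rw [Finset.sum_eq_single t₀]
    · simp [coeff_monomial]
    · intro b _ hne
      rw [coeff_monomial, if_neg (fun h => hne (Subtype.ext h))]
    · intro h
      rw [coeff_monomial, if_pos rfl]
      exact Finsupp.notMem_support_iff.mp h
  have hfne : f ≠ 0 := by
    obtain ⟨t₀, ht₀⟩ : ∃ t₀, l t₀ ≠ 0 := by
      by_contra h
      push_neg at h
      exact hl0 (Finsupp.ext h)
    intro h
    exact ht₀ (by rw [← hcoef t₀, h, coeff_zero])
  have hfI : f ∈ pointsVanishingIdeal P := by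
    rw [← evalLM_eq_zero_iff, hf, map_sum, ← hl, Finsupp.linearCombination_apply,
      Finsupp.sum]
    apply Finset.sum_congr rfl
    intro t _
    rw [← map_smul, smul_monomial, smul_eq_mul, mul_one]
  obtain ⟨t, hlm, _⟩ := exists_isLeadingMonomial m hfne
  have htSM : IsStdMonomial m (pointsVanishingIdeal P) t := by
    have hne := mem_support_iff.mp hlm.1
    rw [hf, MvPolynomial.coeff_sum] at hne
    obtain ⟨t', _, ht'⟩ := Finset.exists_ne_zero_of_sum_ne_zero hne
    rw [coeff_monomial] at ht'
    have : t'.1 = t := by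
      by_contra h
      exact ht' (if_neg h)
    exact this ▸ t'.2
  exact htSM ⟨f, hfI, hlm⟩

end Aux3

theorem ncard_stdMonomials_pointsVanishingIdeal' (n : ℕ) (m : MonomialOrder (Fin n))
    (P : Set (Fin n → ZMod 2)) :
    {t : Fin n →₀ ℕ | IsStdMonomial m (pointsVanishingIdeal P) t}.ncard = P.ncard := by
  classical
  set SM := {t : Fin n →₀ ℕ | IsStdMonomial m (pointsVanishingIdeal P) t} with hSM
  haveI : Finite ↥SM := (stdMonomials_finite m P).to_subtype
  haveI : Fintype ↥SM := Fintype.ofFinite _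
  haveI : Fintype ↥P := Fintype.ofFinite _
  have hspan : ⊤ ≤ Submodule.span (ZMod 2)
      (Set.range fun t : ↥SM => evalLM P (monomial t.1 1)) := by
    intro v _
    obtain ⟨f, rfl⟩ := evalLM_surjective P v
    have : Set.range (fun t : ↥SM => evalLM P (monomial t.1 1)) =
        (fun t : Fin n →₀ ℕ => evalLM P (monomial t 1)) '' SM := by
      rw [Set.image_eq_range]
    rw [this]
    exact evalLM_mem_span m P f
  have b : Module.Basis ↥SM (ZMod 2) (↥P → ZMod 2) :=
    Module.Basis.mk (stdMonomials_linearIndependent m P) hspan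
  have h1 : Module.finrank (ZMod 2) (↥P → ZMod 2) = Fintype.card ↥SM :=
    Module.finrank_eq_card_basis b
  have h2 : Module.finrank (ZMod 2) (↥P → ZMod 2) = Fintype.card ↥P :=
    Module.finrank_fintype_fun_eq_card _
  rw [← Nat.card_coe_set_eq, ← Nat.card_coe_set_eq,
    Nat.card_eq_fintype_card, Nat.card_eq_fintype_card, ← h1, h2]

/-- For any monomial order, the set of standard monomials of the vanishing ideal of `P`
has cardinality `|P|`. -/
theorem ncard_stdMonomials_pointsVanishingIdeal (n : ℕ) (m : MonomialOrder (Fin n))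
    (P : Set (Fin n → ZMod 2)) :
    {t : Fin n →₀ ℕ | IsStdMonomial m (pointsVanishingIdeal P) t}.ncard = P.ncard := by
  exact ncard_stdMonomials_pointsVanishingIdeal' n m P
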